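/- Let p be a symmetric heat kernel on X satisfying the lower Gaussian bound with constants C ≥ 1 and C₁ > 0, with associated semigroup T_t. Then for every μ-measurable set E ⊆ X and every t > 0, (1/√t) ∫_{Δ^{√t}} |χ_E(x) − χ_E(y)| / (√(μ(B(x,√t)))·√(μ(B(y,√t)))) d(μ⊗μ)(x,y) ≤ (C'/√t) ∫_{E^{√t} \ E} T_t χ_E dμ, where C' depends only on C and C₁. -/

import Mathlib

open MeasureTheory Metric Filter Topology
open scoped ENNReal NNReal

noncomputable section

/-- Local Lipschitz constant (pointwise lower dilation), valued in `ℝ≥0∞`. -/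
def locLip {X : Type*} [MetricSpace X] (u : X → ℝ) (y : X) : ℝ≥0∞ :=
  Filter.liminf
    (fun ρ : ℝ => ⨆ z ∈ Metric.ball y ρ, ENNReal.ofReal (|u y - u z| / dist y z))
    (𝓝[>] (0 : ℝ))

/-- `μ` is doubling with constant `cD`:
`0 < μ(B(x,2r)) ≤ cD·μ(B(x,r)) < ∞` for every `x` and `r > 0`. -/
def IsDoubling {X : Type*} [MetricSpace X] [MeasurableSpace X] (μ : Measure X)
    (cD : ℝ≥0∞) : Prop :=
  ∀ (x : X) (r : ℝ), 0 < r →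
    0 < μ (Metric.ball x (2 * r)) ∧ μ (Metric.ball x (2 * r)) ≤ cD * μ (Metric.ball x r) ∧
      μ (Metric.ball x r) < ⊤

/-- `X` supports a 1-Poincaré inequality with constants `cP` and `lam`. -/
def PoincareOne {X : Type*} [MetricSpace X] [MeasurableSpace X] (μ : Measure X)
    (cP lam : ℝ) : Prop :=
  ∀ u : X → ℝ, (∃ K : NNReal, LipschitzWith K u) →
    ∀ (x : X) (r : ℝ), 0 < r →
      ∫⁻ y in Metric.ball x r, ENNReal.ofReal |u y - ⨍ z in Metric.ball x r, u z ∂μ| ∂μ ≤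
        ENNReal.ofReal (cP * r) * ∫⁻ y in Metric.ball x (lam * r), locLip u y ∂μ

/-- `f` is locally Lipschitz on the set `F`. -/
def LocLipOn {X : Type*} [MetricSpace X] (F : Set X) (f : X → ℝ) : Prop :=
  ∀ x ∈ F, ∃ (K : NNReal) (t : Set X), t ∈ 𝓝[F] x ∧ LipschitzOnWith K f t

/-- Total variation `‖Du‖(F)` of `u` on an open set `F`. -/
def totalVar {X : Type*} [MetricSpace X] [MeasurableSpace X] (μ : Measure X)
    (u : X → ℝ) (F : Set X) : ℝ≥0∞ :=
  sInf { E : ℝ≥0∞ | ∃ v : ℕ → X → ℝ,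
    (∀ j, LocLipOn F (v j)) ∧
    (∀ K : Set X, IsCompact K → K ⊆ F →
      Filter.Tendsto (fun j => ∫⁻ x in K, ENNReal.ofReal |v j x - u x| ∂μ)
        Filter.atTop (𝓝 0)) ∧
    E = Filter.liminf (fun j => ∫⁻ x in F, locLip (v j) x ∂μ) Filter.atTop }

/-- Near-diagonal Korevaar–Schoen type energy. -/
def diagEnergy {X : Type*} [MetricSpace X] [MeasurableSpace X] (μ : Measure X)
    (u : X → ℝ) (ε : ℝ) : ℝ≥0∞ :=
  (ENNReal.ofReal ε)⁻¹ *
    ∫⁻ q in {q : X × X | dist q.1 q.2 < ε},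
      ENNReal.ofReal |u q.1 - u q.2| /
        (μ (Metric.ball q.1 ε) ^ ((1:ℝ)/2) * μ (Metric.ball q.2 ε) ^ ((1:ℝ)/2)) ∂(μ.prod μ)

/-- A symmetric heat kernel: jointly measurable and symmetric in the space variables. -/
def SymmHeatKernel {X : Type*} [MetricSpace X] [MeasurableSpace X]
    (p : ℝ → X → X → ℝ≥0∞) : Prop :=
  Measurable (fun q : ℝ × X × X => p q.1 q.2.1 q.2.2) ∧
    ∀ (t : ℝ) (x y : X), 0 < t → p t x y = p t y x

/-- Lower Gaussian bound for the heat kernel. -/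
def LowerGaussianBound {X : Type*} [MetricSpace X] [MeasurableSpace X] (μ : Measure X)
    (p : ℝ → X → X → ℝ≥0∞) (C C₁ : ℝ) : Prop :=
  ∀ (t : ℝ), 0 < t → ∀ x y : X,
    ENNReal.ofReal (C⁻¹ * Real.exp (-(dist x y) ^ 2 / (C₁ * t))) /
        (μ (Metric.ball x (Real.sqrt t)) ^ ((1:ℝ)/2) *
          μ (Metric.ball y (Real.sqrt t)) ^ ((1:ℝ)/2)) ≤ p t x y

/-- Upper Gaussian bound for the heat kernel. -/
def UpperGaussianBound {X : Type*} [MetricSpace X] [MeasurableSpace X] (μ : Measure X)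
    (p : ℝ → X → X → ℝ≥0∞) (C C₂ : ℝ) : Prop :=
  ∀ (t : ℝ), 0 < t → ∀ x y : X,
    p t x y ≤ ENNReal.ofReal (C * Real.exp (-(dist x y) ^ 2 / (C₂ * t))) /
        (μ (Metric.ball x (Real.sqrt t)) ^ ((1:ℝ)/2) *
          μ (Metric.ball y (Real.sqrt t)) ^ ((1:ℝ)/2))

/-- The heat semigroup applied to the characteristic function of `E`:
`T_t χ_E (x) = ∫_E p(t,x,y) dμ(y)`. -/
def heatSet {X : Type*} [MetricSpace X] [MeasurableSpace X] (μ : Measure X)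
    (p : ℝ → X → X → ℝ≥0∞) (t : ℝ) (E : Set X) (x : X) : ℝ≥0∞ :=
  ∫⁻ y in E, p t x y ∂μ

/-- Tubular neighborhood `E^r = ⋃_{x ∈ E} B(x,r)`. -/
def tub {X : Type*} [MetricSpace X] (E : Set X) (r : ℝ) : Set X :=
  ⋃ x ∈ E, Metric.ball x r


/-- A doubling (σ-finite) metric measure space is second countable. -/
lemma secondCountable_of_isDoubling {X : Type} [MetricSpace X] [MeasurableSpace X]
    [BorelSpace X] (μ : MeasureTheory.Measure X) [MeasureTheory.SigmaFinite μ] (cD : ℝ≥0∞)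
    (hdb : IsDoubling μ cD) : SecondCountableTopology X := by
  apply Metric.secondCountable_of_almost_dense_set
  intro ε hε
  have hchain : ∀ c ⊆ {s : Set X | ∀ x ∈ s, ∀ y ∈ s, x ≠ y → ε ≤ dist x y},
      IsChain (· ⊆ ·) c →
      ∃ ub ∈ {s : Set X | ∀ x ∈ s, ∀ y ∈ s, x ≠ y → ε ≤ dist x y}, ∀ s ∈ c, s ⊆ ub := by
    intro c hcS hc
    refine ⟨⋃₀ c, ?_, fun s hs => Set.subset_sUnion_of_mem hs⟩
    intro x hx y hy hxy
    obtain ⟨s₁, hs₁, hxs⟩ := hx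
    obtain ⟨s₂, hs₂, hys⟩ := hy
    rcases hc.total hs₁ hs₂ with h | h
    · exact hcS hs₂ x (h hxs) y hys hxy
    · exact hcS hs₁ x hxs y (h hys) hxy
  obtain ⟨m, hm⟩ := zorn_subset _ hchain
  refine ⟨m, ?_, ?_⟩
  · -- countability of the maximal `ε`-separated set
    have hdisj : Pairwise (Function.onFun Disjoint fun i : m => Metric.ball (i : X) (ε / 2)) := by
      intro i j hij
      apply Set.disjoint_left.2
      intro z hzi hzj
      have hsep : ε ≤ dist (i : X) (j : X) :=
        hm.1 (i : X) i.2 (j : X) j.2 (Subtype.coe_injective.ne hij)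
      have hzi' : dist (i : X) z < ε / 2 := by rw [dist_comm]; exact hzi
      have hzj' : dist z (j : X) < ε / 2 := hzj
      have : dist (i : X) (j : X) < ε := by
        calc dist (i : X) (j : X) ≤ dist (i : X) z + dist z (j : X) := dist_triangle _ _ _
          _ < ε / 2 + ε / 2 := add_lt_add hzi' hzj'
          _ = ε := add_halves ε
      exact absurd hsep (not_le.2 this)
    have hcnt := MeasureTheory.Measure.countable_meas_pos_of_disjoint_iUnion (μ := μ)
      (fun i : m => Metric.isOpen_ball.measurableSet) hdisj
    have huniv : {i : m | 0 < μ (Metric.ball (i : X) (ε / 2))} = Set.univ := by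
      apply Set.eq_univ_of_forall
      intro i
      have h := (hdb (i : X) (ε / 4) (by positivity)).1
      have h2 : (2 : ℝ) * (ε / 4) = ε / 2 := by ring
      rwa [h2] at h
    rw [huniv] at hcnt
    exact Set.countable_coe_iff.mp (Set.countable_univ_iff.mp hcnt)
  · intro x
    by_cases hx : ∃ y ∈ m, dist x y ≤ ε
    · exact hx
    push_neg at hx
    exfalso
    have hxm : x ∉ m := by
      intro h
      have := hx x h
      rw [dist_self] at this
      linarith
    have hins : insert x m ∈ {s : Set X | ∀ x ∈ s, ∀ y ∈ s, x ≠ y → ε ≤ dist x y} := by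
      intro a ha b hb hab
      rcases ha with rfl | ha
      · rcases hb with rfl | hb
        · exact absurd rfl hab
        · exact (hx b hb).le
      · rcases hb with rfl | hb
        · rw [dist_comm]; exact (hx a ha).le
        · exact hm.1 a ha b hb hab
    exact hxm (hm.2 hins (Set.subset_insert x m) (Set.mem_insert x m))

/-- Under the lower Gaussian bound with constants `C, C₁` there is a
constant `C' = C'(C, C₁)` so that for every measurable `E` and `t > 0`, the
near-diagonal energy of `χ_E` at scale `√t` is bounded by
`(C'/√t) ∫_{E^{√t} \ E} T_t χ_E dμ`. -/
theorem stmt9 (C C₁ : ℝ) (hC : 1 ≤ C) (hC₁ : 0 < C₁) :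
    ∃ C' : ℝ≥0∞, C' ≠ ⊤ ∧
      ∀ (X : Type) [MetricSpace X] [CompleteSpace X] [MeasurableSpace X] [BorelSpace X]
        (μ : Measure X) (cD : ℝ≥0∞), 1 ≤ cD → IsDoubling μ cD →
        ∀ p : ℝ → X → X → ℝ≥0∞, SymmHeatKernel p → LowerGaussianBound μ p C C₁ →
          ∀ E : Set X, MeasurableSet E → ∀ t : ℝ, 0 < t →
            diagEnergy μ (E.indicator fun _ => (1 : ℝ)) (Real.sqrt t) ≤
              C' * (ENNReal.ofReal (Real.sqrt t))⁻¹ *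
                ∫⁻ x in tub E (Real.sqrt t) \ E, heatSet μ p t E x ∂μ := by
  classical
  set κ : ℝ≥0∞ := ENNReal.ofReal (C⁻¹ * Real.exp (-(1 / C₁))) with hκdef
  have hCpos : (0:ℝ) < C := lt_of_lt_of_le one_pos hC
  have hκr : (0:ℝ) < C⁻¹ * Real.exp (-(1 / C₁)) :=
    mul_pos (inv_pos.2 hCpos) (Real.exp_pos _)
  have hκ0 : κ ≠ 0 := (ENNReal.ofReal_pos.2 hκr).ne'
  have hκtop : κ ≠ ⊤ := ENNReal.ofReal_ne_top
  refine ⟨2 * κ⁻¹, ENNReal.mul_ne_top (by norm_num) (ENNReal.inv_ne_top.2 hκ0), ?_⟩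
  intro X _ _ _ _ μ cD hcD hdb p hp hlgb E hE t ht
  set s : ℝ := Real.sqrt t with hsdef
  have hs : 0 < s := Real.sqrt_pos.2 ht
  haveI : SigmaFinite μ := by
    rcases isEmpty_or_nonempty X with hX | hX
    · rw [μ.eq_zero_of_isEmpty]; infer_instance
    · obtain ⟨x₀⟩ := hX
      exact ⟨⟨⟨fun n => Metric.ball x₀ (n + 1), fun _ => trivial,
        fun n => (hdb x₀ (n + 1) (by positivity)).2.2, by
          apply Set.eq_univ_of_forall
          intro x
          obtain ⟨n, hn⟩ := exists_nat_gt (dist x x₀)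
          exact Set.mem_iUnion.2 ⟨n, Metric.mem_ball.2 (hn.trans (lt_add_one _))⟩⟩⟩⟩
  haveI : SecondCountableTopology X :=
    secondCountable_of_isDoubling μ cD hdb
  set u : X → ℝ := E.indicator fun _ => (1 : ℝ) with hudef
  set Δ : Set (X × X) := {q : X × X | dist q.1 q.2 < s} with hΔdef
  have hΔmeas : MeasurableSet Δ := measurableSet_lt measurable_dist measurable_const
  set A : Set (X × X) := Eᶜ ×ˢ E with hAdef
  set B : Set (X × X) := E ×ˢ Eᶜ with hBdef
  have hAmeas : MeasurableSet A := hE.compl.prod hE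
  have hBmeas : MeasurableSet B := hE.prod hE.compl
  set F : X × X → ℝ≥0∞ := fun q => p t q.1 q.2 with hFdef
  have hFmeas : Measurable F := hp.1.comp (measurable_const.prodMk measurable_id)
  set g : X × X → ℝ≥0∞ := fun q =>
    ENNReal.ofReal |u q.1 - u q.2| /
      (μ (Metric.ball q.1 s) ^ ((1:ℝ)/2) * μ (Metric.ball q.2 s) ^ ((1:ℝ)/2)) with hgdef
  -- pointwise bound on Δ
  have hpt : ∀ q ∈ Δ, g q ≤ κ⁻¹ * (A ∪ B).indicator F q := by
    intro q hq
    by_cases hq' : q ∈ A ∪ B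
    · have habs : |u q.1 - u q.2| = 1 := by
        rcases hq' with h | h
        · obtain ⟨h1, h2⟩ := h
          simp [hudef, Set.indicator_of_notMem (Set.notMem_of_mem_compl h1),
            Set.indicator_of_mem h2]
        · obtain ⟨h1, h2⟩ := h
          simp [hudef, Set.indicator_of_mem h1,
            Set.indicator_of_notMem (Set.notMem_of_mem_compl h2)]
      have hd2 : dist q.1 q.2 ^ 2 < t := (Real.lt_sqrt dist_nonneg).1 hq
      have hdiv : dist q.1 q.2 ^ 2 / (C₁ * t) ≤ 1 / C₁ := by
        rw [div_le_div_iff₀ (by positivity) hC₁]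
        nlinarith [hd2.le, hC₁.le]
      have hexp : C⁻¹ * Real.exp (-(1 / C₁)) ≤
          C⁻¹ * Real.exp (-dist q.1 q.2 ^ 2 / (C₁ * t)) := by
        apply mul_le_mul_of_nonneg_left _ (by positivity)
        apply Real.exp_le_exp.2
        rw [neg_div]
        exact neg_le_neg hdiv
      have hκle : κ ≤ ENNReal.ofReal (C⁻¹ * Real.exp (-dist q.1 q.2 ^ 2 / (C₁ * t))) :=
        ENNReal.ofReal_le_ofReal hexp
      have hball := hlgb t ht q.1 q.2
      rw [Set.indicator_of_mem hq']
      calc g q = 1 / (μ (Metric.ball q.1 s) ^ ((1:ℝ)/2) * μ (Metric.ball q.2 s) ^ ((1:ℝ)/2)) := by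
            rw [hgdef]; simp [habs]
        _ = (κ⁻¹ * κ) / (μ (Metric.ball q.1 s) ^ ((1:ℝ)/2) * μ (Metric.ball q.2 s) ^ ((1:ℝ)/2)) := by
            rw [ENNReal.inv_mul_cancel hκ0 hκtop]
        _ ≤ (κ⁻¹ * ENNReal.ofReal (C⁻¹ * Real.exp (-dist q.1 q.2 ^ 2 / (C₁ * t)))) /
              (μ (Metric.ball q.1 s) ^ ((1:ℝ)/2) * μ (Metric.ball q.2 s) ^ ((1:ℝ)/2)) :=
            ENNReal.div_le_div_right (mul_le_mul_right hκle _) _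
        _ = κ⁻¹ * (ENNReal.ofReal (C⁻¹ * Real.exp (-dist q.1 q.2 ^ 2 / (C₁ * t))) /
              (μ (Metric.ball q.1 s) ^ ((1:ℝ)/2) * μ (Metric.ball q.2 s) ^ ((1:ℝ)/2))) := by
            rw [mul_div_assoc]
        _ ≤ κ⁻¹ * F q := mul_le_mul_right hball _
    · obtain ⟨hA', hB'⟩ := not_or.1 hq'
      have hiff : q.1 ∈ E ↔ q.2 ∈ E := by
        constructor
        · intro h
          by_contra h2
          exact hB' (Set.mem_prod.2 ⟨h, h2⟩)
        · intro h
          by_contra h2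
          exact hA' (Set.mem_prod.2 ⟨h2, h⟩)
      have heq : u q.1 = u q.2 := by
        by_cases h : q.1 ∈ E
        · simp [hudef, Set.indicator_of_mem h, Set.indicator_of_mem (hiff.1 h)]
        · simp [hudef, Set.indicator_of_notMem h,
            Set.indicator_of_notMem (fun h2 => h (hiff.2 h2))]
      have : g q = 0 := by
        rw [hgdef]
        simp [heq]
      rw [this, Set.indicator_of_notMem hq']
      simp
  -- the main chain of inequalities
  have hswap : ∫⁻ q in B ∩ Δ, F q ∂(μ.prod μ) = ∫⁻ q in A ∩ Δ, F q ∂(μ.prod μ) := by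
    have hpre : Prod.swap ⁻¹' (B ∩ Δ) = A ∩ Δ := by
      ext q
      simp only [Set.mem_preimage, Set.mem_inter_iff, hΔdef, hAdef, hBdef,
        Set.mem_prod, Prod.fst_swap, Prod.snd_swap, Set.mem_setOf_eq]
      rw [dist_comm]
      tauto
    calc ∫⁻ q in B ∩ Δ, F q ∂(μ.prod μ)
        = ∫⁻ q in B ∩ Δ, F q ∂(Measure.map Prod.swap (μ.prod μ)) := by
          rw [Measure.prod_swap]
      _ = ∫⁻ q in Prod.swap ⁻¹' (B ∩ Δ), F (Prod.swap q) ∂(μ.prod μ) := by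
          rw [Measure.restrict_map measurable_swap ((hBmeas.inter hΔmeas))]
          exact lintegral_map hFmeas measurable_swap
      _ = ∫⁻ q in A ∩ Δ, F q ∂(μ.prod μ) := by
          rw [hpre]
          apply lintegral_congr
          intro q
          exact hp.2 t q.2 q.1 ht
  have hsub : A ∩ Δ ⊆ (tub E s \ E) ×ˢ E := by
    rintro ⟨x, y⟩ ⟨⟨hx, hy⟩, hd⟩
    refine ⟨⟨?_, hx⟩, hy⟩
    exact Set.mem_biUnion hy (Metric.mem_ball.2 (show dist x y < s from hd))
  have hfub : ∫⁻ q in (tub E s \ E) ×ˢ E, F q ∂(μ.prod μ)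
      = ∫⁻ x in tub E s \ E, heatSet μ p t E x ∂μ := by
    rw [← Measure.prod_restrict]
    exact MeasureTheory.lintegral_prod F hFmeas.aemeasurable
  have key : ∫⁻ q in Δ, g q ∂(μ.prod μ)
      ≤ 2 * κ⁻¹ * ∫⁻ x in tub E s \ E, heatSet μ p t E x ∂μ := by
    calc ∫⁻ q in Δ, g q ∂(μ.prod μ)
        ≤ ∫⁻ q in Δ, κ⁻¹ * (A ∪ B).indicator F q ∂(μ.prod μ) :=
          setLIntegral_mono' hΔmeas hpt
      _ = κ⁻¹ * ∫⁻ q in Δ, (A ∪ B).indicator F q ∂(μ.prod μ) :=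
          lintegral_const_mul' _ _ (ENNReal.inv_ne_top.2 hκ0)
      _ = κ⁻¹ * ∫⁻ q in (A ∪ B) ∩ Δ, F q ∂(μ.prod μ) := by
          rw [lintegral_indicator (hAmeas.union hBmeas), Measure.restrict_restrict
            (hAmeas.union hBmeas)]
      _ = κ⁻¹ * (∫⁻ q in A ∩ Δ, F q ∂(μ.prod μ) + ∫⁻ q in B ∩ Δ, F q ∂(μ.prod μ)) := by
          rw [Set.union_inter_distrib_right, lintegral_union (hBmeas.inter hΔmeas)]
          exact (Set.disjoint_left.2 (by
            rintro ⟨x, y⟩ ⟨⟨hx, hy⟩, _⟩ ⟨⟨hx', _⟩, _⟩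
            exact hx hx')).symm.symm
      _ = κ⁻¹ * (2 * ∫⁻ q in A ∩ Δ, F q ∂(μ.prod μ)) := by
          rw [hswap, two_mul]
      _ ≤ κ⁻¹ * (2 * ∫⁻ q in (tub E s \ E) ×ˢ E, F q ∂(μ.prod μ)) := by
          gcongr
      _ = 2 * κ⁻¹ * ∫⁻ x in tub E s \ E, heatSet μ p t E x ∂μ := by
          rw [hfub]; ring
  rw [diagEnergy]
  calc (ENNReal.ofReal s)⁻¹ * ∫⁻ q in Δ, g q ∂(μ.prod μ)
      ≤ (ENNReal.ofReal s)⁻¹ * (2 * κ⁻¹ * ∫⁻ x in tub E s \ E, heatSet μ p t E x ∂μ) :=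
        mul_le_mul_right key _
    _ = 2 * κ⁻¹ * (ENNReal.ofReal s)⁻¹ * ∫⁻ x in tub E s \ E, heatSet μ p t E x ∂μ := by
        ring
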